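/- Let r, n, m, a, b, i be positive integers with 1 ≤ n ≤ r-2, 0 ≤ m ≤ r-2, a ≥ 2, b ≥ 1, i ≤ r+1, satisfying i = (r+1)b - (r-n-1)(ab-1) and r+1 = ia - (r-m-1)(ab-1). Then a ≤ m+2, a(r-n-1) ≤ r, b ≤ n+1+i-r, and b(r-m-1) ≤ i-1. -/
import Mathlib


theorem stmt_1 (r n m a b i : ℤ)
    (hr : 0 < r) (hn1 : 1 ≤ n) (hn2 : n ≤ r - 2) (hm1 : 0 ≤ m) (hm2 : m ≤ r - 2)
    (ha : 2 ≤ a) (hb : 1 ≤ b) (hi : 0 < i) (hi2 : i ≤ r + 1)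
    (h1 : i = (r + 1) * b - (r - n - 1) * (a * b - 1))
    (h2 : r + 1 = i * a - (r - m - 1) * (a * b - 1)) :
    a ≤ m + 2 ∧ a * (r - n - 1) ≤ r ∧ b ≤ n + 1 + i - r ∧ b * (r - m - 1) ≤ i - 1 := by
  -- from h2 alone: a * x = m + 2 where x = i - (r-m-1)*b
  have hx : a * (i - (r - m - 1) * b) = m + 2 := by linear_combination -h2
  -- from h1 alone: b * k = i - (r-n-1) where k = r+1 - (r-n-1)*a
  have hk : b * (r + 1 - (r - n - 1) * a) = i - (r - n - 1) := by linear_combination -h1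
  -- key identity: (ab-1) * ((r-m-1) - k) = 0
  have hkey : (a * b - 1) * ((r - m - 1) - (r + 1 - (r - n - 1) * a)) = 0 := by
    linear_combination a * h1 + h2
  have hab : 1 ≤ a * b - 1 := by nlinarith
  have hk_eq : r + 1 - (r - n - 1) * a = r - m - 1 := by
    rcases mul_eq_zero.mp hkey with h | h
    · linarith
    · linarith
  have hx1 : 1 ≤ i - (r - m - 1) * b := by nlinarith
  refine ⟨by nlinarith, by nlinarith, ?_, by nlinarith⟩
  -- b ≤ n + 1 + i - r : since k = r-m-1 ≥ 1 and b*k = i-(r-n-1)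
  nlinarith [hk, hk_eq, mul_le_mul_of_nonneg_left (by linarith : (1:ℤ) ≤ r - m - 1) (by linarith : (0:ℤ) ≤ b)]
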